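/- Let 𝒳 be a metrizable topological vector space with compatible translation-invariant metric, and let fₙ, f : 𝒳 → [0,+∞]. If f(u) ≤ (Γ-liminf fₙ)(u) for every u ≠ 0 and the sequence (fₙ) is asymptotically equicoercive (every sequence (u^{(k)}) with sup_k f^{(n_k)}(u^{(k)}) < ∞ along a strictly increasing (n_k) has a subsequence converging to some u ≠ 0), then for the sup-functionals ℛₘ(K) = sup_{u∈K} f(u) over compact symmetric sets K with index i(K) ≥ m, one has inf_{K∈𝒦ₘ} sup_{u∈K} f(u) ≤ liminf_n inf_{K∈𝒦ₘ} sup_{u∈K} fₙ(u) for every m ≥ 1. -/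

import Mathlib

open Filter Topology ENNReal

private lemma stmt8_liminf_subseq {g : ℕ → ℝ≥0∞} {φ : ℕ → ℕ} (h : StrictMono φ) :
    liminf g atTop ≤ liminf (fun j => g (φ j)) atTop := by
  have hm : map φ atTop ≤ atTop := h.tendsto_atTop
  calc liminf g atTop ≤ liminf g (map φ atTop) := liminf_le_liminf_of_le hm
    _ = liminf (fun j => g (φ j)) atTop := (Filter.liminf_comp g φ atTop).symm

theorem stmt8 {X : Type*} [AddCommGroup X] [Module ℝ X] [TopologicalSpace X]
    [IsTopologicalAddGroup X] [ContinuousSMul ℝ X] [TopologicalSpace.MetrizableSpace X]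
    (idx : Set X → ℕ)
    -- the index of a nonempty compact symmetric set avoiding 0 is at least 1
    (hidx_pos : ∀ K : Set X, K.Nonempty → IsCompact K → K = -K → (0 : X) ∉ K → 1 ≤ idx K)
    -- neighborhood monotonicity of the index
    (hidx_nbhd : ∀ K : Set X, K.Nonempty → IsCompact K → K = -K → (0 : X) ∉ K →
      ∃ U : Set X, IsOpen U ∧ U ⊆ {x : X | x ≠ 0} ∧ K ⊆ U ∧
        ∀ K' : Set X, K'.Nonempty → IsCompact K' → K' = -K' → K' ⊆ U → idx K' ≤ idx K)
    -- subadditivity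
    (hidx_add : ∀ K₁ K₂ : Set X,
      K₁.Nonempty → IsCompact K₁ → K₁ = -K₁ → (0 : X) ∉ K₁ →
      K₂.Nonempty → IsCompact K₂ → K₂ = -K₂ → (0 : X) ∉ K₂ →
      idx (K₁ ∪ K₂) ≤ idx K₁ + idx K₂)
    -- monotonicity under continuous odd maps
    (hidx_odd : ∀ (K : Set X) (pimap : X → X),
      K.Nonempty → IsCompact K → K = -K → (0 : X) ∉ K →
      ContinuousOn pimap K → (∀ u ∈ K, pimap (-u) = -pimap u) → (∀ u ∈ K, pimap u ≠ 0) →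
      idx K ≤ idx (pimap '' K))
    (f : X → ℝ≥0∞) (fseq : ℕ → X → ℝ≥0∞)
    -- Γ-liminf lower bound off the origin
    (hΓ : ∀ u : X, u ≠ 0 →
      f u ≤ ⨆ (U : Set X) (_ : U ∈ 𝓝 u),
        liminf (fun n => ⨅ v ∈ U, fseq n v) atTop)
    -- asymptotic equicoercivity
    (hec : ∀ nk : ℕ → ℕ, StrictMono nk → ∀ uk : ℕ → X,
      (⨆ k, fseq (nk k) (uk k)) < ⊤ →
      ∃ σ : ℕ → ℕ, StrictMono σ ∧ ∃ u : X, u ≠ 0 ∧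
        Tendsto (fun j => uk (σ j)) atTop (𝓝 u)) :
    ∀ m : ℕ, 1 ≤ m →
      (⨅ (K : Set X) (_ : K.Nonempty ∧ IsCompact K ∧ K = -K ∧ (0 : X) ∉ K ∧ m ≤ idx K),
        ⨆ u ∈ K, f u)
      ≤ liminf (fun n =>
          ⨅ (K : Set X) (_ : K.Nonempty ∧ IsCompact K ∧ K = -K ∧ (0 : X) ∉ K ∧ m ≤ idx K),
            ⨆ u ∈ K, fseq n u) atTop := by
  intro m hm
  letI : MetricSpace X := TopologicalSpace.metrizableSpaceMetric X
  refine le_of_forall_gt_imp_ge_of_dense fun b hb => ?_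
  rcases eq_or_ne b ⊤ with rfl | hbtop
  · exact le_top
  have hfreq : ∃ᶠ n in atTop,
      (⨅ (K : Set X) (_ : K.Nonempty ∧ IsCompact K ∧ K = -K ∧ (0 : X) ∉ K ∧ m ≤ idx K),
        ⨆ u ∈ K, fseq n u) < b :=
    frequently_lt_of_liminf_lt (by isBoundedDefault) hb
  obtain ⟨nk, hnk, hnkb⟩ := extraction_of_frequently_atTop hfreq
  have hex : ∀ k, ∃ K : Set X,
      (K.Nonempty ∧ IsCompact K ∧ K = -K ∧ (0 : X) ∉ K ∧ m ≤ idx K) ∧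
      (⨆ u ∈ K, fseq (nk k) u) < b := by
    intro k
    have := hnkb k
    simpa only [iInf_lt_iff, exists_prop] using this
  choose K hKP hKb using hex
  -- uniform bound for sequences picked from the K's
  have hbound : ∀ (τ : ℕ → ℕ) (w : ℕ → X), (∀ i, w i ∈ K (τ i)) →
      (⨆ i, fseq (nk (τ i)) (w i)) < ⊤ := by
    intro τ w hw
    refine lt_of_le_of_lt (iSup_le fun i => ?_) (lt_top_iff_ne_top.2 hbtop)
    exact (le_biSup _ (hw i)).trans (hKb (τ i)).le
  -- the asymptotic set
  set Kinf : Set X := {u : X | ∃ σ : ℕ → ℕ, StrictMono σ ∧ ∃ v : ℕ → X,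
    (∀ j, v j ∈ K (σ j)) ∧ Tendsto v atTop (𝓝 u)} with hKinfdef
  have hextract : ∀ (τ : ℕ → ℕ), StrictMono τ → ∀ (w : ℕ → X), (∀ i, w i ∈ K (τ i)) →
      ∃ σ : ℕ → ℕ, StrictMono σ ∧ ∃ u : X, u ≠ 0 ∧
        Tendsto (fun j => w (σ j)) atTop (𝓝 u) ∧ u ∈ Kinf := by
    intro τ hτ w hw
    obtain ⟨σ, hσ, u, hu0, hconv⟩ := hec (fun i => nk (τ i)) (hnk.comp hτ) w (hbound τ w hw)
    exact ⟨σ, hσ, u, hu0, hconv,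
      ⟨fun j => τ (σ j), hτ.comp hσ, fun j => w (σ j), fun j => hw (σ j), hconv⟩⟩
  -- nonempty
  have hKne : ∀ k, (K k).Nonempty := fun k => (hKP k).1
  choose w0 hw0 using hKne
  obtain ⟨σ0, hσ0, u0, hu00, hconv0, hu0mem⟩ := hextract id strictMono_id w0 hw0
  have hKinf_ne : Kinf.Nonempty := ⟨u0, hu0mem⟩
  -- avoids zero
  have hKinf_zero : (0 : X) ∉ Kinf := by
    rintro ⟨σ, hσ, v, hv, hconv⟩
    obtain ⟨σ', hσ', u, hu0, hconv'⟩ := hec (fun j => nk (σ j)) (hnk.comp hσ) v (hbound σ v hv)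
    have h0 : Tendsto (fun j => v (σ' j)) atTop (𝓝 (0 : X)) := hconv.comp hσ'.tendsto_atTop
    exact hu0 (tendsto_nhds_unique hconv' h0)
  -- symmetric
  have hKneg : ∀ u, u ∈ Kinf → -u ∈ Kinf := by
    rintro u ⟨σ, hσ, v, hv, hconv⟩
    refine ⟨σ, hσ, fun j => -(v j), fun j => ?_, hconv.neg⟩
    have h := hv j
    rw [(hKP (σ j)).2.2.1] at h
    simpa using h
  have hKinf_symm : Kinf = -Kinf := by
    ext u
    constructor
    · intro hu
      exact Set.mem_neg.2 (hKneg u hu)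
    · intro hu
      have := hKneg _ (Set.mem_neg.1 hu)
      simpa using this
  -- compact
  have hKinf_cpt : IsCompact Kinf := by
    refine IsSeqCompact.isCompact ?_
    intro x hx
    simp only [hKinfdef, Set.mem_setOf_eq] at hx
    choose S hS V hV hVconv using hx
    have hch : ∀ i (prev : ℕ), ∃ j, dist (V i j) (x i) < 1 / (i + 1) ∧ prev < S i j := by
      intro i prev
      have h1 : ∀ᶠ j in atTop, V i j ∈ Metric.ball (x i) (1 / (i + 1)) :=
        (hVconv i).eventually_mem (Metric.ball_mem_nhds _ (by positivity))
      have h2 : ∀ᶠ j in atTop, prev < S i j := (hS i).tendsto_atTop.eventually_gt_atTop prev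
      obtain ⟨j, hj1, hj2⟩ := (h1.and h2).exists
      exact ⟨j, by simpa [Metric.mem_ball] using hj1, hj2⟩
    choose! jfun hjdist hjgt using hch
    let F : ℕ → ℕ := fun i => Nat.rec (jfun 0 0) (fun i ih => jfun (i + 1) (S i ih)) i
    set τ : ℕ → ℕ := fun i => S i (F i) with hτdef
    set w : ℕ → X := fun i => V i (F i) with hwdef
    have hτmono : StrictMono τ := by
      apply strictMono_nat_of_lt_succ
      intro i
      exact hjgt (i + 1) (S i (F i))
    have hwK : ∀ i, w i ∈ K (τ i) := fun i => hV i (F i)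
    have hwdist : ∀ i, dist (w i) (x i) < 1 / (i + 1) := by
      intro i
      cases i with
      | zero => exact hjdist 0 0
      | succ i => exact hjdist (i + 1) (S i (F i))
    obtain ⟨σ, hσ, u, hu0, hconv, humem⟩ := hextract τ hτmono w hwK
    refine ⟨u, humem, σ, hσ, ?_⟩
    have hd0 : Tendsto (fun j => dist (w (σ j)) (x (σ j))) atTop (𝓝 0) := by
      refine squeeze_zero (fun j => dist_nonneg) (fun j => ?_)
        tendsto_one_div_add_atTop_nhds_zero_nat
      refine (hwdist (σ j)).le.trans ?_
      apply one_div_le_one_div_of_le (by positivity)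
      exact_mod_cast Nat.succ_le_succ (hσ.le_apply)
    exact hconv.congr_dist hd0
  -- index
  have hKinf_idx : m ≤ idx Kinf := by
    obtain ⟨U, hUo, -, hKU, hUmax⟩ := hidx_nbhd Kinf hKinf_ne hKinf_cpt hKinf_symm hKinf_zero
    by_cases hsub : ∃ k, K k ⊆ U
    · obtain ⟨k, hk⟩ := hsub
      exact le_trans (hKP k).2.2.2.2 (hUmax (K k) (hKP k).1 (hKP k).2.1 (hKP k).2.2.1 hk)
    push_neg at hsub
    have hout : ∀ k, ∃ wv, wv ∈ K k ∧ wv ∉ U := by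
      intro k
      rcases Set.not_subset.1 (hsub k) with ⟨wv, hw1, hw2⟩
      exact ⟨wv, hw1, hw2⟩
    choose wv hwv hwvU using hout
    obtain ⟨σ, hσ, u, hu0, hconv, humem⟩ := hextract id strictMono_id wv hwv
    have hucompl : u ∈ Uᶜ :=
      hUo.isClosed_compl.mem_of_tendsto hconv (Eventually.of_forall fun j => hwvU (σ j))
    exact absurd (hKU humem) hucompl
  -- the value bound
  have hsupf : (⨆ u ∈ Kinf, f u) ≤ b := by
    refine iSup₂_le fun u hu => ?_
    have hu0 : u ≠ 0 := fun h => hKinf_zero (h ▸ hu)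
    obtain ⟨σ, hσ, v, hv, hconv⟩ := hu
    refine (hΓ u hu0).trans (iSup₂_le fun U hU => ?_)
    refine (stmt8_liminf_subseq (g := fun n => ⨅ x ∈ U, fseq n x) (hnk.comp hσ)).trans ?_
    refine liminf_le_of_frequently_le' ?_
    have hev : ∀ᶠ j in atTop, v j ∈ U := hconv.eventually_mem hU
    refine (hev.mono fun j hj => ?_).frequently
    calc (⨅ x ∈ U, fseq (nk (σ j)) x) ≤ fseq (nk (σ j)) (v j) := biInf_le _ hj
      _ ≤ ⨆ x ∈ K (σ j), fseq (nk (σ j)) x := le_biSup _ (hv j)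
      _ ≤ b := (hKb (σ j)).le
  exact le_trans (iInf₂_le Kinf ⟨hKinf_ne, hKinf_cpt, hKinf_symm, hKinf_zero, hKinf_idx⟩) hsupf
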